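/- Vanishing case of the Cauchy-type identity for Grothendieck polynomials: for every integer ℓ ≥ k one has Σ_{i,j ≥ 0, i+j = ℓ} (-1)^j e_i(z) G_j(z) = 0 in ℤ[z_1,…,z_k]. -/

import Mathlib

open Finset MvPolynomial

noncomputable section

/-- The elementary symmetric polynomial `e_r` of a family of ring elements
(`e_0 = 1`, `e_r = 0` for `r` larger than the number of elements). -/
def esymmF {R : Type*} [CommRing R] {m : ℕ} (f : Fin m → R) (r : ℕ) : R :=
  ∑ t ∈ Finset.powersetCard r Finset.univ, ∏ j ∈ t, f j

/-- The complete homogeneous symmetric polynomial `h_r` of a family of ring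
elements: the sum of all monomials of degree `r` (`h_0 = 1`). -/
def hsymmF {R : Type*} [CommRing R] {m : ℕ} (f : Fin m → R) (r : ℕ) : R :=
  ∑ μ : Sym (Fin m) r, (μ.1.map f).prod

/-- `e_r(z)` in `ℤ[z_1,…,z_k]`. -/
def eP (k : ℕ) (r : ℕ) : MvPolynomial (Fin k) ℤ :=
  esymmF (fun i => X i) r

/-- `h_r(z)` in `ℤ[z_1,…,z_k]`. -/
def hP (k : ℕ) (r : ℕ) : MvPolynomial (Fin k) ℤ :=
  hsymmF (fun i => X i) r

/-- The single-row Grothendieck polynomial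
`G_j(z) = Σ_{a,b ≥ 0, a+b ≤ k} (-1)^b h_{j+a}(z) e_b(z)`. -/
def GP (k : ℕ) (j : ℕ) : MvPolynomial (Fin k) ℤ :=
  ∑ a ∈ Finset.range (k + 1), ∑ b ∈ Finset.range (k + 1 - a),
    (-1) ^ b * hP k (j + a) * eP k b


section Aux
open PowerSeries

lemma geom_inv {R : Type*} [CommRing R] (c : R) :
    (1 - PowerSeries.C c * PowerSeries.X) * PowerSeries.mk (fun m => c ^ m) = 1 := by
  ext n
  rw [sub_mul, one_mul, map_sub]
  cases n with
  | zero => simp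
  | succ n =>
    rw [mul_assoc, PowerSeries.coeff_C_mul,
      PowerSeries.coeff_succ_X_mul, coeff_mk, coeff_mk]
    simp [pow_succ, mul_comm]

lemma coeff_prod_geom (k d : ℕ) :
    PowerSeries.coeff d (∏ i : Fin k, PowerSeries.mk fun m => (X i : MvPolynomial (Fin k) ℤ) ^ m) =
      hP k d := by
  rw [PowerSeries.coeff_prod, hP, hsymmF]
  simp only [coeff_mk]
  refine Finset.sum_bij' (i := fun l hl => (⟨Finsupp.toMultiset l, by
      have h := (Finset.mem_finsuppAntidiag'.1 hl).1
      rw [Finsupp.card_toMultiset]; exact h⟩ : Sym (Fin k) d))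
    (j := fun μ _ => μ.1.toFinsupp) ?_ ?_ ?_ ?_ ?_
  · intro a _; exact Finset.mem_univ _
  · intro μ _
    rw [Finset.mem_finsuppAntidiag']
    refine ⟨?_, Finset.subset_univ _⟩
    have h := Finsupp.card_toMultiset (Multiset.toFinsupp μ.1)
    rw [Multiset.toFinsupp_toMultiset] at h
    have h2 : (Multiset.toFinsupp μ.1).sum (fun _ x => x) = Multiset.card μ.1 := h.symm
    exact h2.trans μ.2
  · intro l _
    simp [Multiset.toFinsupp_toMultiset]
  · intro μ _
    apply Subtype.ext
    simp [Finsupp.toMultiset_toFinsupp]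
  · intro l hl
    rw [Finset.prod_multiset_map_count, Finsupp.toFinset_toMultiset]
    simp only [Finsupp.count_toMultiset]
    refine (Finset.prod_subset (Finset.subset_univ _) ?_).symm
    intro i _ hi
    rw [Finsupp.notMem_support_iff.1 hi, pow_zero]

end Aux

lemma coeff_prod_lin (k n : ℕ) :
    PowerSeries.coeff n
      (∏ i : Fin k, (1 - PowerSeries.C (X i : MvPolynomial (Fin k) ℤ) * PowerSeries.X)) =
      (-1) ^ n * eP k n := by
  have h1 : ∀ i : Fin k, (1 - PowerSeries.C (X i : MvPolynomial (Fin k) ℤ) * PowerSeries.X)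
      = PowerSeries.C (-(X i) : MvPolynomial (Fin k) ℤ) * PowerSeries.X + 1 := by
    intro i; rw [map_neg]; ring
  simp only [h1]
  rw [Finset.prod_add, map_sum]
  have hterm : ∀ t : Finset (Fin k),
      PowerSeries.coeff n
        ((∏ i ∈ t, PowerSeries.C (-(X i) : MvPolynomial (Fin k) ℤ) * PowerSeries.X) *
          ∏ i ∈ Finset.univ \ t, (1 : PowerSeries (MvPolynomial (Fin k) ℤ))) =
      if t.card = n then (-1) ^ n * ∏ i ∈ t, X i else 0 := by
    intro t
    have hneg : (∏ x ∈ t, -(X x : MvPolynomial (Fin k) ℤ)) = (-1) ^ t.card * ∏ x ∈ t, X x := by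
      rw [← Finset.prod_const (-1 : MvPolynomial (Fin k) ℤ), ← Finset.prod_mul_distrib]
      simp [neg_one_mul]
    rw [Finset.prod_const_one, mul_one, Finset.prod_mul_distrib, ← map_prod,
      Finset.prod_const, PowerSeries.coeff_C_mul, PowerSeries.coeff_X_pow, hneg]
    by_cases h : t.card = n
    · rw [if_pos h.symm, if_pos h, h, mul_one]
    · rw [if_neg (fun hh => h hh.symm), if_neg h, mul_zero]
  rw [Finset.sum_congr rfl (fun t _ => hterm t), Finset.sum_ite, Finset.sum_const_zero,
    add_zero, ← Finset.mul_sum]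
  congr 1
  rw [eP, esymmF, Finset.powersetCard_eq_filter]

lemma hP_series (k : ℕ) :
    PowerSeries.mk (fun m => hP k m)
      = ∏ i : Fin k, PowerSeries.mk fun m => (X i : MvPolynomial (Fin k) ℤ) ^ m := by
  apply PowerSeries.ext; intro d
  rw [PowerSeries.coeff_mk, coeff_prod_geom]

lemma key_identity (k n : ℕ) (hn : 1 ≤ n) :
    ∑ p ∈ _root_.Finset.HasAntidiagonal.antidiagonal n,
      (-1 : MvPolynomial (Fin k) ℤ) ^ p.1 * eP k p.1 * hP k p.2 = 0 := by
  have hEH : (∏ i : Fin k, (1 - PowerSeries.C (X i : MvPolynomial (Fin k) ℤ) * PowerSeries.X)) *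
      PowerSeries.mk (fun m => hP k m) = 1 := by
    rw [hP_series, ← Finset.prod_mul_distrib]
    rw [Finset.prod_congr rfl (fun i _ => geom_inv (X i : MvPolynomial (Fin k) ℤ)),
      Finset.prod_const_one]
  have := congrArg (PowerSeries.coeff n) hEH
  rw [PowerSeries.coeff_mul, PowerSeries.coeff_one, if_neg (by omega)] at this
  rw [← this]
  apply Finset.sum_congr rfl
  intro p _
  rw [coeff_prod_lin, PowerSeries.coeff_mk, mul_assoc]

lemma eP_zero (k r : ℕ) (h : k < r) : eP k r = 0 := by
  rw [eP, esymmF, Finset.powersetCard_eq_empty.2 (by simpa using h), Finset.sum_empty]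

/-- Vanishing case of the Cauchy-type identity for Grothendieck polynomials:
for `ℓ ≥ k`, `Σ_{i+j=ℓ} (-1)^j e_i(z) G_j(z) = 0`. -/
theorem cauchy_groth_vanishing (k : ℕ) (hk : 1 ≤ k) (ℓ : ℕ) (hℓ : k ≤ ℓ) :
    ∑ p ∈ _root_.Finset.HasAntidiagonal.antidiagonal ℓ, (-1) ^ p.2 * eP k p.1 * GP k p.2 = 0 := by
  have inner : ∀ a : ℕ, ∑ p ∈ _root_.Finset.HasAntidiagonal.antidiagonal ℓ,
      (-1 : MvPolynomial (Fin k) ℤ) ^ p.2 * eP k p.1 * hP k (p.2 + a) = 0 := by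
    intro a
    have key := key_identity k (ℓ + a) (by omega)
    rw [Finset.Nat.sum_antidiagonal_eq_sum_range_succ_mk] at key
    have hsub : Finset.range (ℓ + 1) ⊆ Finset.range (ℓ + a + 1) :=
      Finset.range_subset_range.2 (by omega)
    have hzero : ∀ i ∈ Finset.range (ℓ + a + 1), i ∉ Finset.range (ℓ + 1) →
        (-1 : MvPolynomial (Fin k) ℤ) ^ i * eP k i * hP k (ℓ + a - i) = 0 := by
      intro i h1 h2
      simp only [Finset.mem_range] at h1 h2
      rw [eP_zero k i (by omega), mul_zero, zero_mul]
    have main : ∑ i ∈ Finset.range (ℓ + 1),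
        (-1 : MvPolynomial (Fin k) ℤ) ^ i * eP k i * hP k (ℓ + a - i) = 0 := by
      rw [Finset.sum_subset hsub hzero]
      exact key
    rw [Finset.Nat.sum_antidiagonal_eq_sum_range_succ_mk]
    calc ∑ i ∈ Finset.range (ℓ + 1),
          (-1 : MvPolynomial (Fin k) ℤ) ^ ((i, ℓ - i).2) * eP k (i, ℓ - i).1 *
            hP k ((i, ℓ - i).2 + a)
        = (-1) ^ ℓ * ∑ i ∈ Finset.range (ℓ + 1),
            (-1 : MvPolynomial (Fin k) ℤ) ^ i * eP k i * hP k (ℓ + a - i) := by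
          rw [Finset.mul_sum]
          apply Finset.sum_congr rfl
          intro i hi
          have hi' : i ≤ ℓ := by simp only [Finset.mem_range] at hi; omega
          have h1 : ℓ - i + a = ℓ + a - i := by omega
          have hsq : ((-1 : MvPolynomial (Fin k) ℤ) ^ i) * (-1) ^ i = 1 := by
            rw [← pow_add, ← two_mul, pow_mul]
            norm_num
          have h2 : (-1 : MvPolynomial (Fin k) ℤ) ^ (ℓ - i) * (-1) ^ i = (-1) ^ ℓ := by
            rw [← pow_add, Nat.sub_add_cancel hi']
          have h3 : (-1 : MvPolynomial (Fin k) ℤ) ^ ℓ * (-1) ^ i = (-1) ^ (ℓ - i) := by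
            rw [← h2, mul_assoc, hsq, mul_one]
          simp only
          rw [h1, ← h3]
          ring
      _ = 0 := by rw [main, mul_zero]
  have expand : ∀ p ∈ _root_.Finset.HasAntidiagonal.antidiagonal ℓ,
      (-1 : MvPolynomial (Fin k) ℤ) ^ p.2 * eP k p.1 * GP k p.2
        = ∑ a ∈ Finset.range (k + 1), ∑ b ∈ Finset.range (k + 1 - a),
            (-1) ^ b * eP k b * ((-1) ^ p.2 * eP k p.1 * hP k (p.2 + a)) := by
    intro p _
    rw [GP, Finset.mul_sum]
    apply Finset.sum_congr rfl
    intro a _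
    rw [Finset.mul_sum]
    apply Finset.sum_congr rfl
    intro b _
    ring
  rw [Finset.sum_congr rfl expand, Finset.sum_comm]
  apply Finset.sum_eq_zero
  intro a _
  rw [Finset.sum_comm]
  apply Finset.sum_eq_zero
  intro b _
  rw [← Finset.mul_sum, inner a, mul_zero]

end
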